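/- On a 5-dimensional almost nearly cosymplectic manifold, the curvature tensor satisfies R̄(Z, X)ξ̄ = λ²[η̄(X)Z - η̄(Z)X]. -/
import Mathlib


/-- On a 5-dimensional almost nearly cosymplectic manifold, the
curvature satisfies `R̄(Z,X)ξ̄ = λ²[η̄(X)Z - η̄(Z)X]`.  The barred curvature is
related to the curvature `R` of the underlying nearly cosymplectic metric by the
formula (curv5) of the paper; `R` agrees with the Sasaki-Einstein curvature,
giving `R(Z,X)ξ̃ = η̃(X)Z - η̃(Z)X` with `ξ̃ = λ⁻¹ξ`, `η̃ = λη`; and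
`ξ̄ = (2/3)ξ`, `η̄ = (3/2)η`, `h² = -λ²(I - η⊗ξ)`. -/
theorem stmt_13 {V : Type*} [AddCommGroup V] [Module ℝ V] [FiniteDimensional ℝ V]
    (hdim : Module.finrank ℝ V = 5)
    (g : V →ₗ[ℝ] V →ₗ[ℝ] ℝ) (η : V →ₗ[ℝ] ℝ) (ξ : V)
    (h : V →ₗ[ℝ] V) (lam : ℝ) (hlam : lam ≠ 0)
    (R Rb : V → V → V → V)
    (hηξ : η ξ = 1)
    (hη : ∀ X, η X = g X ξ)
    (hgsymm : ∀ X Y, g X Y = g Y X)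
    (hhξ : h ξ = 0)
    (hηh : ∀ X, η (h X) = 0)
    (hghξ : ∀ Z, g (h Z) ξ = 0)
    (hh2 : ∀ X, h (h X) = -(lam ^ 2) • X + (lam ^ 2 * η X) • ξ)
    (hRsmul : ∀ (c : ℝ) Z X Y, R Z X (c • Y) = c • R Z X Y)
    (hSasaki : ∀ Z X, R Z X (lam⁻¹ • ξ) = (lam * η X) • Z - (lam * η Z) • X)
    (hcurv : ∀ Z X Y, Rb Z X Y = R Z X Y
      + ((1/2) * g (h Z) Y) • h X - ((1/2) * g (h X) Y) • h Z
      + (g (h Z) X) • h Y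
      - ((5 * lam ^ 2 / 4) * (η Y * η Z)) • X
      + ((5 * lam ^ 2 / 4) * (η Y * η X)) • Z
      - ((lam ^ 2 / 2) * (η X * g Z Y - η Z * g X Y)) • ξ) :
    ∀ Z X, Rb Z X ((2/3 : ℝ) • ξ) =
      (lam ^ 2 * ((3/2) * η X)) • Z - (lam ^ 2 * ((3/2) * η Z)) • X := by
  intro Z X
  have hRξ : R Z X ξ = (lam ^ 2 * η X) • Z - (lam ^ 2 * η Z) • X := by
    have h1 : R Z X ((1 : ℝ) • ξ) = R Z X (lam • (lam⁻¹ • ξ)) := by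
      rw [smul_smul, mul_inv_cancel₀ hlam]
    have h2 := h1
    rw [one_smul, hRsmul, hSasaki] at h2
    rw [h2, smul_sub, smul_smul, smul_smul]
    ring_nf
  rw [hcurv]
  have h23 : R Z X ((2/3 : ℝ) • ξ) = (2/3 : ℝ) • R Z X ξ := hRsmul _ _ _ _
  rw [h23, hRξ]
  simp only [map_smul, hghξ, hhξ, hηξ, smul_eq_mul, mul_zero, zero_smul, smul_zero,
    ← hη]
  module
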